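/- Let (R, m) be a Henselian local ring with finite residue field of cardinality q and π(x) a π-polynomial. Every f(x) ∈ Z(R) can be written as f(x) = Σ_{i=0}^{q-1} xⁱ pᵢ(π(x)) where each pᵢ(x) ∈ Z(m). -/

import Mathlib

open Polynomial IsLocalRing

/-- The ideal of polynomials in `R[X]` mapping every element of `S` into the ideal `I`. -/
def zeroFunctionsInto {R : Type*} [CommRing R] (S : Set R) (I : Ideal R) : Ideal R[X] where
  carrier := {f | ∀ s ∈ S, f.eval s ∈ I}
  add_mem' := fun hf hg s hs => by simpa using I.add_mem (hf s hs) (hg s hs)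
  zero_mem' := fun s _ => by simp
  smul_mem' := fun c f hf s hs => by simpa using I.mul_mem_left (c.eval s) (hf s hs)

/-- The ideal of polynomials vanishing on the subset `S`. -/
def zeroFunctions {R : Type*} [CommRing R] (S : Set R) : Ideal R[X] :=
  zeroFunctionsInto S ⊥

lemma mem_zeroFunctions_iff {R : Type*} [CommRing R] (S : Set R) (f : R[X]) :
    f ∈ zeroFunctions S ↔ ∀ s ∈ S, f.eval s = 0 := by
  simp only [zeroFunctions, zeroFunctionsInto, Ideal.mem_bot]
  rfl

/-- A polynomial of degree `< q` is the obvious combination of `X^i`'s. -/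
lemma small_expand {R : Type*} [CommRing R] {q : ℕ} {f : R[X]} (hd : f.natDegree < q) :
    f = ∑ i : Fin q, X ^ (i : ℕ) * C (f.coeff i) := by
  conv_lhs => rw [f.as_sum_range' q hd]
  rw [← Fin.sum_univ_eq_sum_range (fun i => (monomial i) (f.coeff i)) q]
  exact Finset.sum_congr rfl fun i _ => by rw [← C_mul_X_pow_eq_monomial, mul_comm]

/-- π-adic expansion: any polynomial is `∑ X^i * pᵢ(π)` for a monic `π` of degree `q`. -/
lemma expand_aux {R : Type*} [CommRing R] [Nontrivial R] {q : ℕ} (hq : 0 < q)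
    (π : R[X]) (hmon : π.Monic) (hdeg : π.natDegree = q) :
    ∀ n (f : R[X]), f.natDegree < n → ∃ p : Fin q → R[X],
      f = ∑ i : Fin q, X ^ (i : ℕ) * (p i).comp π := by
  intro n
  induction n with
  | zero => intro f h; omega
  | succ n ih =>
    intro f hf
    by_cases hd : f.natDegree < q
    · refine ⟨fun i => C (f.coeff i), ?_⟩
      simp only [C_comp]
      exact small_expand hd
    · have hfne : f ≠ 0 := fun h0 => hd (by simp [h0, hq])
      obtain ⟨p, hp⟩ := ih (f /ₘ π) (by
        have h1 := natDegree_divByMonic f hmon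
        rw [hdeg] at h1
        omega)
      have hr : (f %ₘ π).natDegree < q := by
        by_cases h0 : f %ₘ π = 0
        · simpa [h0] using hq
        · have := natDegree_lt_natDegree h0 (degree_modByMonic_lt f hmon)
          omega
      refine ⟨fun i => C ((f %ₘ π).coeff i) + X * p i, ?_⟩
      conv_lhs => rw [← modByMonic_add_div f π, hp, small_expand hr]
      rw [Finset.mul_sum, ← Finset.sum_add_distrib]
      refine Finset.sum_congr rfl fun i _ => ?_
      simp only [add_comp, C_comp, mul_comp, X_comp]
      ring

theorem statement_15 {R : Type*} [CommRing R] [HenselianLocalRing R]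
    (q : ℕ) (c : Fin q → R) (hc : Function.Bijective (fun i => residue R (c i)))
    (f : R[X]) (hf : f ∈ zeroFunctions (Set.univ : Set R)) :
    ∃ p : Fin q → R[X],
      (∀ i, p i ∈ zeroFunctions (maximalIdeal R : Set R)) ∧
      f = ∑ i : Fin q, X ^ (i : ℕ) * (p i).comp (∏ i, (X - C (c i))) := by
  classical
  set π : R[X] := ∏ i, (X - C (c i)) with hπdef
  have hq : 0 < q := by
    obtain ⟨i, -⟩ := hc.2 0
    exact i.pos
  have hnodal : π = Lagrange.nodal Finset.univ c := rfl
  have hmon : π.Monic := Lagrange.nodal_monic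
  have hdeg : π.natDegree = q := by
    rw [hnodal, Lagrange.natDegree_nodal, Finset.card_univ, Fintype.card_fin]
  have hdegpos : 0 < π.degree := natDegree_pos_iff_degree_pos.mp (by omega)
  obtain ⟨p, hp⟩ := expand_aux hq π hmon hdeg (f.natDegree + 1) f (Nat.lt_succ_self _)
  refine ⟨p, fun i₀ => ?_, hp⟩
  rw [mem_zeroFunctions_iff]
  intro a ha
  -- Hensel lifting: for each j there is a root rⱼ of π(x) = a near cⱼ.
  have hroot : ∀ j : Fin q, ∃ r, π.eval r = a ∧ r - c j ∈ maximalIdeal R := by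
    intro j
    have hmon' : (π - C a).Monic := by
      rw [sub_eq_add_neg]
      refine hmon.add_of_left ?_
      calc (-C a).degree ≤ 0 := by rw [degree_neg]; exact degree_C_le
        _ < π.degree := hdegpos
    have hπcj : π.eval (c j) = 0 := by
      rw [hnodal]; exact Lagrange.eval_nodal_at_node (Finset.mem_univ j)
    have heval : (π - C a).eval (c j) ∈ maximalIdeal R := by
      rw [eval_sub, eval_C, hπcj, zero_sub]
      exact (maximalIdeal R).neg_mem ha
    have hder : IsUnit ((π - C a).derivative.eval (c j)) := by
      rw [derivative_sub, derivative_C, sub_zero, hnodal,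
        Lagrange.eval_nodal_derivative_eval_node_eq (Finset.mem_univ j),
        Lagrange.eval_nodal]
      rw [← residue_ne_zero_iff_isUnit, map_prod]
      rw [Finset.prod_ne_zero_iff]
      intro i hi
      rw [map_sub, sub_ne_zero]
      exact fun h => (Finset.mem_erase.mp hi).1 (hc.1 h.symm)
    obtain ⟨r, hr1, hr2⟩ := HenselianLocalRing.is_henselian (π - C a) hmon' (c j) heval hder
    refine ⟨r, ?_, hr2⟩
    have : π.eval r - a = 0 := by simpa [IsRoot] using hr1
    exact sub_eq_zero.mp this
  choose r hr1 hr2 using hroot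
  set M : Matrix (Fin q) (Fin q) R := Matrix.vandermonde r with hM
  set v : Fin q → R := fun i => (p i).eval a with hv
  have hfr : ∀ j, f.eval (r j) = 0 := fun j =>
    (mem_zeroFunctions_iff _ f).mp hf (r j) (Set.mem_univ _)
  have hMv : M.mulVec v = 0 := by
    funext j
    have : f.eval (r j) = ∑ i : Fin q, r j ^ (i : ℕ) * (p i).eval a := by
      rw [hp, eval_finset_sum]
      exact Finset.sum_congr rfl fun i _ => by
        rw [eval_mul, eval_pow, eval_X, eval_comp, hr1 j]
    simp only [Matrix.mulVec, dotProduct, hM, Matrix.vandermonde, Matrix.of_apply,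
      hv, Pi.zero_apply]
    rw [← this]
    exact hfr j
  have hdet : IsUnit M.det := by
    rw [← residue_ne_zero_iff_isUnit]
    have hmap : (residue R) M.det = (Matrix.vandermonde (fun i => residue R (c i))).det := by
      rw [RingHom.map_det]
      congr 1
      ext i j
      simp only [RingHom.mapMatrix_apply, Matrix.map_apply, hM, Matrix.vandermonde,
        Matrix.of_apply, map_pow]
      congr 1
      have : residue R (r i) - residue R (c i) = 0 := by
        rw [← map_sub, residue_eq_zero_iff]; exact hr2 i
      exact sub_eq_zero.mp this
    rw [hmap, Matrix.det_vandermonde]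
    rw [Finset.prod_ne_zero_iff]
    intro i _
    rw [Finset.prod_ne_zero_iff]
    intro j hj
    rw [sub_ne_zero]
    exact fun h => (Finset.mem_Ioi.mp hj).ne' (hc.1 h)
  have : Invertible M := M.invertibleOfIsUnitDet hdet
  have hv0 : v = 0 := by
    calc v = (⅟M).mulVec (M.mulVec v) := by
            rw [Matrix.mulVec_mulVec, invOf_mul_self, Matrix.one_mulVec]
      _ = 0 := by rw [hMv, Matrix.mulVec_zero]
  exact congrFun hv0 i₀
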